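/- Let (B, W, E, b, w) be a finite bipartite multigraph with B and W nonempty which is connected (any two vertices of B ⊔ W are joined by a finite path of edges). Then the multigraph is non-degenerate (every edge belongs to some perfect matching) if and only if it satisfies the strong marriage condition. -/

import Mathlib

open Finset
open scoped Classical

/-- A perfect matching in a finite bipartite multigraph with black vertices `B`,
white vertices `W`, edges `E` and endpoint maps `b : E → B`, `w : E → W`:
a set of edges `D` such that every black vertex and every white vertex is
incident to exactly one edge of `D`. -/
def IsPerfectMatching {B W E : Type*} (b : E → B) (w : E → W) (D : Finset E) : Prop :=
  (∀ v : B, ∃! e : E, e ∈ D ∧ b e = v) ∧ (∀ v : W, ∃! e : E, e ∈ D ∧ w e = v)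

/-- The simple graph on `B ⊕ W` associated to a bipartite multigraph: a black vertex
`x` and a white vertex `y` are adjacent iff some edge `e` has `b e = x` and `w e = y`. -/
def bipartiteGraph {B W E : Type*} (b : E → B) (w : E → W) : SimpleGraph (B ⊕ W) where
  Adj x y := (∃ e : E, x = Sum.inl (b e) ∧ y = Sum.inr (w e)) ∨
    (∃ e : E, x = Sum.inr (w e) ∧ y = Sum.inl (b e))
  symm := by
    constructor
    rintro x y (⟨e, hx, hy⟩ | ⟨e, hx, hy⟩)
    · exact Or.inr ⟨e, hy, hx⟩
    · exact Or.inl ⟨e, hy, hx⟩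
  loopless := by
    constructor
    rintro x (⟨e, hx, hy⟩ | ⟨e, hx, hy⟩) <;> subst hx <;> cases hy

section Aux

variable {B W E : Type*} [Fintype B] [Fintype W] [Fintype E]

/-- Swapping the roles of black and white vertices preserves perfect matchings. -/
lemma IsPerfectMatching.swap {b : E → B} {w : E → W} {D : Finset E}
    (h : IsPerfectMatching b w D) : IsPerfectMatching w b D := ⟨h.2, h.1⟩

/-- From a perfect matching, extract the matching map `m : B → E`. -/
lemma matching_map {b : E → B} {w : E → W} {D : Finset E}
    (hD : IsPerfectMatching b w D) :
    ∃ m : B → E, (∀ x, m x ∈ D ∧ b (m x) = x) ∧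
      Function.Injective (fun x => w (m x)) := by
  choose m hm₁ hm₂ using fun v => (hD.1 v).exists
  refine ⟨m, fun x => ⟨hm₁ x, hm₂ x⟩, fun x x' hxx => ?_⟩
  have h1 := (hD.2 (w (m x))).unique ⟨hm₁ x, rfl⟩ ⟨hm₁ x', hxx.symm⟩
  rw [← hm₂ x, ← hm₂ x', h1]

/-- If a perfect matching exists, `|S| ≤ |N(S)|` for every `S ⊆ B`. -/
lemma card_le_card_nbhd {b : E → B} {w : E → W} {D : Finset E}
    (hD : IsPerfectMatching b w D) (S : Finset B) :
    S.card ≤ (univ.filter (fun y : W => ∃ e : E, b e ∈ S ∧ w e = y)).card := by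
  obtain ⟨m, hm, hinj⟩ := matching_map hD
  have hsub : S.image (fun x => w (m x)) ⊆
      univ.filter (fun y : W => ∃ e : E, b e ∈ S ∧ w e = y) := by
    intro y hy
    obtain ⟨x, hx, rfl⟩ := mem_image.mp hy
    exact mem_filter.mpr ⟨mem_univ _, m x, by rw [(hm x).2]; exact hx, rfl⟩
  calc S.card = (S.image (fun x => w (m x))).card :=
        (card_image_of_injective S hinj).symm
    _ ≤ _ := card_le_card hsub

/-- Key step: if `|N(S)| = |S|` then every matching edge whose white endpoint
lies in `N(S)` has its black endpoint in `S`. -/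
lemma mem_of_card_eq {b : E → B} {w : E → W} {D : Finset E}
    (hD : IsPerfectMatching b w D) (S : Finset B)
    (hcard : (univ.filter (fun y : W => ∃ e : E, b e ∈ S ∧ w e = y)).card = S.card)
    {e : E} (he : e ∈ D)
    (hw : w e ∈ univ.filter (fun y : W => ∃ e : E, b e ∈ S ∧ w e = y)) :
    b e ∈ S := by
  obtain ⟨m, hm, hinj⟩ := matching_map hD
  have hsub : S.image (fun x => w (m x)) ⊆
      univ.filter (fun y : W => ∃ e : E, b e ∈ S ∧ w e = y) := by
    intro y hy
    obtain ⟨x, hx, rfl⟩ := mem_image.mp hy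
    exact mem_filter.mpr ⟨mem_univ _, m x, by rw [(hm x).2]; exact hx, rfl⟩
  have heq : S.image (fun x => w (m x)) =
      univ.filter (fun y : W => ∃ e : E, b e ∈ S ∧ w e = y) := by
    apply eq_of_subset_of_card_le hsub
    rw [card_image_of_injective S hinj, hcard]
  rw [← heq] at hw
  obtain ⟨x, hx, hwx⟩ := mem_image.mp hw
  have : e = m x := (hD.2 (w e)).unique ⟨he, rfl⟩ ⟨(hm x).1, hwx⟩
  rw [this, (hm x).2]; exact hx

/-- A predicate preserved by adjacency is preserved by reachability. -/
lemma reachable_iff_invariant {V : Type*} {G : SimpleGraph V} {P : V → Prop}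
    (h : ∀ u v, G.Adj u v → (P u ↔ P v)) {u v : V} (hr : G.Reachable u v) :
    P u ↔ P v := by
  obtain ⟨p⟩ := hr
  induction p with
  | nil => exact Iff.rfl
  | cons ha _ ih => exact (h _ _ ha).trans ih

/-- The strong marriage condition on the black side implies `|B| ≤ |W|`. -/
lemma card_le_of_strong [Nonempty B] [Nonempty W] (b : E → B) (w : E → W)
    (h1 : ∀ S : Finset B, S.Nonempty → S ≠ univ →
      S.card < (univ.filter (fun y : W => ∃ e : E, b e ∈ S ∧ w e = y)).card) :
    Fintype.card B ≤ Fintype.card W := by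
  rcases le_or_gt (Fintype.card B) 1 with hB | hB
  · exact hB.trans Fintype.card_pos
  · obtain ⟨x⟩ := (inferInstance : Nonempty B)
    set S : Finset B := univ.erase x with hS
    have hSne : S.Nonempty := by
      rw [← card_pos, hS, card_erase_of_mem (mem_univ x), card_univ]
      omega
    have hSnu : S ≠ univ := by
      intro h
      have hx : x ∈ S := by rw [h]; exact mem_univ x
      exact notMem_erase x univ hx
    have := h1 S hSne hSnu
    have hle : (univ.filter (fun y : W => ∃ e : E, b e ∈ S ∧ w e = y)).card ≤
        Fintype.card W := by
      rw [← card_univ]; exact card_filter_le _ _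
    have hcS : S.card = Fintype.card B - 1 := by
      rw [hS, card_erase_of_mem (mem_univ x), card_univ]
    omega

end Aux

/-- For a connected finite bipartite multigraph with `B`, `W` nonempty, non-degeneracy
(every edge lies in a perfect matching) is equivalent to the strong marriage condition:
every nonempty proper subset of black vertices is joined to strictly more white
vertices, and vice versa. -/
theorem nondegenerate_iff_strong_marriage
    {B W E : Type*} [Fintype B] [Fintype W] [Fintype E]
    [Nonempty B] [Nonempty W]
    (b : E → B) (w : E → W)
    (hconn : (bipartiteGraph b w).Connected) :
    (∀ e : E, ∃ D : Finset E, IsPerfectMatching b w D ∧ e ∈ D) ↔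
      ((∀ S : Finset B, S.Nonempty → S ≠ univ →
          S.card < (univ.filter (fun y : W => ∃ e : E, b e ∈ S ∧ w e = y)).card) ∧
        (∀ S : Finset W, S.Nonempty → S ≠ univ →
          S.card < (univ.filter (fun x : B => ∃ e : E, w e ∈ S ∧ b e = x)).card)) := by
  have hE : Nonempty E := by
    obtain ⟨x⟩ := (inferInstance : Nonempty B)
    obtain ⟨y⟩ := (inferInstance : Nonempty W)
    obtain ⟨p⟩ := hconn.preconnected (Sum.inl x) (Sum.inr y)
    cases p with
    | cons ha _ =>
      rcases ha with ⟨e, _, _⟩ | ⟨e, _, _⟩ <;> exact ⟨e⟩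
  constructor
  · -- non-degenerate → strong marriage
    intro hnd
    obtain ⟨e₀⟩ := hE
    obtain ⟨D₀, hD₀, _⟩ := hnd e₀
    constructor
    · intro S hSne hSnu
      by_contra hlt
      have hcard : (univ.filter (fun y : W => ∃ e : E, b e ∈ S ∧ w e = y)).card
          = S.card :=
        le_antisymm (not_lt.mp hlt) (card_le_card_nbhd hD₀ S)
      -- invariant predicate
      set P : B ⊕ W → Prop := fun v =>
        match v with
        | Sum.inl x => x ∈ S
        | Sum.inr y => y ∈ univ.filter (fun y : W => ∃ e : E, b e ∈ S ∧ w e = y)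
        with hP
      have hadj : ∀ u v, (bipartiteGraph b w).Adj u v → (P u ↔ P v) := by
        rintro u v (⟨e, rfl, rfl⟩ | ⟨e, rfl, rfl⟩)
        · show b e ∈ S ↔ _
          constructor
          · intro h; exact mem_filter.mpr ⟨mem_univ _, e, h, rfl⟩
          · intro h
            obtain ⟨D, hD, heD⟩ := hnd e
            exact mem_of_card_eq hD S hcard heD h
        · show _ ↔ b e ∈ S
          constructor
          · intro h
            obtain ⟨D, hD, heD⟩ := hnd e
            exact mem_of_card_eq hD S hcard heD h
          · intro h; exact mem_filter.mpr ⟨mem_univ _, e, h, rfl⟩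
      obtain ⟨x, hx⟩ := hSne
      obtain ⟨x', hx'⟩ : ∃ x', x' ∉ S := by
        by_contra h
        push_neg at h
        exact hSnu (eq_univ_of_forall h)
      have := reachable_iff_invariant hadj
        (hconn.preconnected (Sum.inl x) (Sum.inl x'))
      exact hx' (this.mp hx)
    · intro T hTne hTnu
      by_contra hlt
      have hcard : (univ.filter (fun x : B => ∃ e : E, w e ∈ T ∧ b e = x)).card
          = T.card :=
        le_antisymm (not_lt.mp hlt) (card_le_card_nbhd hD₀.swap T)
      set P : B ⊕ W → Prop := fun v =>
        match v with
        | Sum.inl x => x ∈ univ.filter (fun x : B => ∃ e : E, w e ∈ T ∧ b e = x)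
        | Sum.inr y => y ∈ T
        with hP
      have hadj : ∀ u v, (bipartiteGraph b w).Adj u v → (P u ↔ P v) := by
        rintro u v (⟨e, rfl, rfl⟩ | ⟨e, rfl, rfl⟩)
        · show _ ↔ w e ∈ T
          constructor
          · intro h
            obtain ⟨D, hD, heD⟩ := hnd e
            exact mem_of_card_eq hD.swap T hcard heD h
          · intro h; exact mem_filter.mpr ⟨mem_univ _, e, h, rfl⟩
        · show w e ∈ T ↔ _
          constructor
          · intro h; exact mem_filter.mpr ⟨mem_univ _, e, h, rfl⟩
          · intro h
            obtain ⟨D, hD, heD⟩ := hnd e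
            exact mem_of_card_eq hD.swap T hcard heD h
      obtain ⟨y, hy⟩ := hTne
      obtain ⟨y', hy'⟩ : ∃ y', y' ∉ T := by
        by_contra h
        push_neg at h
        exact hTnu (eq_univ_of_forall h)
      have := reachable_iff_invariant hadj
        (hconn.preconnected (Sum.inr y) (Sum.inr y'))
      exact hy' (this.mp hy)
  · -- strong marriage → non-degenerate
    rintro ⟨h1, h2⟩ e₀
    have hBW : Fintype.card B = Fintype.card W :=
      le_antisymm (card_le_of_strong b w h1) (card_le_of_strong w b h2)
    set x₀ := b e₀ with hx₀
    set y₀ := w e₀ with hy₀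
    -- Hall's condition for the reduced graph
    set t : {x : B // x ≠ x₀} → Finset W := fun x =>
      univ.filter (fun y : W => y ≠ y₀ ∧ ∃ e : E, b e = x.1 ∧ w e = y) with ht
    have hall : ∀ s : Finset {x : B // x ≠ x₀}, s.card ≤ (s.biUnion t).card := by
      intro s
      rcases s.eq_empty_or_nonempty with rfl | hsne
      · simp
      · set S : Finset B := s.image Subtype.val with hS
        have hScard : S.card = s.card := card_image_of_injective s Subtype.val_injective
        have hSne : S.Nonempty := hsne.image _
        have hSnu : S ≠ univ := by
          intro h
          have : x₀ ∈ S := h ▸ mem_univ x₀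
          obtain ⟨x, _, hxv⟩ := mem_image.mp this
          exact x.2 hxv
        have hstrong := h1 S hSne hSnu
        have hsub : (univ.filter (fun y : W => ∃ e : E, b e ∈ S ∧ w e = y)).erase y₀
            ⊆ s.biUnion t := by
          intro y hy
          rw [mem_erase] at hy
          obtain ⟨hyne, hyf⟩ := hy
          obtain ⟨_, e, hbe, hwe⟩ := mem_filter.mp hyf
          obtain ⟨x, hxs, hxv⟩ := mem_image.mp hbe
          exact mem_biUnion.mpr ⟨x, hxs,
            mem_filter.mpr ⟨mem_univ _, hyne, e, by rw [hxv], hwe⟩⟩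
        have h1' := pred_card_le_card_erase
          (s := univ.filter (fun y : W => ∃ e : E, b e ∈ S ∧ w e = y)) (a := y₀)
        have h2' := card_le_card hsub
        omega
    obtain ⟨f, hfinj, hf⟩ := (Finset.all_card_le_biUnion_card_iff_exists_injective t).mp hall
    have hf' : ∀ x, f x ≠ y₀ ∧ ∃ e : E, b e = x.1 ∧ w e = f x := by
      intro x
      have := mem_filter.mp (hf x)
      exact this.2
    choose hfne ee hee₁ hee₂ using hf'
    set g : B → E := fun x => if h : x = x₀ then e₀ else ee ⟨x, h⟩ with hg
    have hbg : ∀ x, b (g x) = x := by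
      intro x
      by_cases h : x = x₀
      · rw [hg]; simp only [dif_pos h]; exact h.symm
      · rw [hg]; simp only [dif_neg h]; exact hee₁ ⟨x, h⟩
    have hwg₀ : w (g x₀) = y₀ := by rw [hg]; simp [hy₀]
    have hwg : ∀ x (h : x ≠ x₀), w (g x) = f ⟨x, h⟩ := by
      intro x h
      rw [hg]
      simp only [dif_neg h]
      exact hee₂ ⟨x, h⟩
    have hFinj : Function.Injective (fun x => w (g x)) := by
      intro x x' hxx
      simp only at hxx
      by_cases h : x = x₀ <;> by_cases h' : x' = x₀
      · rw [h, h']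
      · exfalso; apply hfne ⟨x', h'⟩
        rw [← hwg x' h', ← hxx, h, hwg₀]
      · exfalso; apply hfne ⟨x, h⟩
        rw [← hwg x h, hxx, h', hwg₀]
      · have : f ⟨x, h⟩ = f ⟨x', h'⟩ := by rw [← hwg x h, ← hwg x' h', hxx]
        have := hfinj this
        exact congrArg Subtype.val this
    have hFbij : Function.Bijective (fun x => w (g x)) :=
      (Fintype.bijective_iff_injective_and_card _).mpr ⟨hFinj, hBW⟩
    have hginj : Function.Injective g := by
      intro x x' h
      rw [← hbg x, ← hbg x', h]
    refine ⟨univ.image g, ⟨?_, ?_⟩, ?_⟩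
    · intro v
      refine ⟨g v, ⟨mem_image_of_mem g (mem_univ v), hbg v⟩, ?_⟩
      rintro e ⟨heD, hbe⟩
      obtain ⟨x, _, rfl⟩ := mem_image.mp heD
      rw [hbg x] at hbe
      rw [hbe]
    · intro v
      obtain ⟨x, hx⟩ := hFbij.surjective v
      refine ⟨g x, ⟨mem_image_of_mem g (mem_univ x), hx⟩, ?_⟩
      rintro e ⟨heD, hwe⟩
      obtain ⟨x', _, rfl⟩ := mem_image.mp heD
      have : x' = x := hFinj (by rw [hx]; exact hwe)
      rw [this]
    · have : e₀ = g x₀ := by rw [hg]; simp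
      rw [this]
      exact mem_image_of_mem g (mem_univ x₀)
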